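/- Suppose 0 < ℓ ≤ r ≤ 1 and ℓ ≤ A_i/A ≤ r for every i ∈ {1, …, n}, where A = Σ_{i=1}^n A_i. Then the policy π* defined by s_i = A_i/A and τ_i = Σ_{j<i} s_j (demands placed side by side) is a valid scheduling policy, every demand has power intensity A_i/s_i = A, and P^{π*}(t) = A for every t ∈ [0,1); in particular P_max^{π*} = A, which is optimal. -/

import Mathlib

open Finset Set

/-- A scheduling policy for `n` demands with malleability parameters `l ≤ r`:
each demand `i` is supplied without interruption on `[tau i, tau i + s i] ⊆ [0,1]`,
with duration `s i ∈ [l, r]`. -/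
structure Policy (l r : ℝ) (n : ℕ) where
  tau : Fin n → ℝ
  s : Fin n → ℝ
  tau_nonneg : ∀ i, 0 ≤ tau i
  fits : ∀ i, tau i + s i ≤ 1
  s_lb : ∀ i, l ≤ s i
  s_ub : ∀ i, s i ≤ r

/-- The instantaneous power at time `t`: the sum of the consumption rates
`A i / s i` of the demands active at `t` (half-open supply intervals). -/
noncomputable def power {l r : ℝ} {n : ℕ} (A : Fin n → ℝ) (π : Policy l r n) (t : ℝ) : ℝ :=
  ∑ i : Fin n, Set.indicator (Set.Ico (π.tau i) (π.tau i + π.s i)) (fun _ => A i / π.s i) t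

/-- The power peak of a policy: the supremum of the instantaneous power over `[0,1)`. -/
noncomputable def peak {l r : ℝ} {n : ℕ} (A : Fin n → ℝ) (π : Policy l r n) : ℝ :=
  sSup (power A π '' Set.Ico (0 : ℝ) 1)

/-- The optimal power peak: the infimum of the power peaks over all policies. -/
noncomputable def Popt (l r : ℝ) (n : ℕ) (A : Fin n → ℝ) : ℝ :=
  sInf {p : ℝ | ∃ π : Policy l r n, p = peak A π}

open MeasureTheory in
/-- Lower bound: any policy has peak at least `∑ A i`. -/
lemma peak_lower_bound {l r : ℝ} {n : ℕ} (A : Fin n → ℝ)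
    (hl : 0 < l) (hA : ∀ i, 0 < A i) (π : Policy l r n) :
    (∑ j, A j) ≤ peak A π := by
  have hs_pos : ∀ i, 0 < π.s i := fun i => lt_of_lt_of_le hl (π.s_lb i)
  set f := power A π with hf
  have hvol : volume (Set.Ico (0:ℝ) 1) < ⊤ := measure_Ico_lt_top
  -- each indicator is integrable on [0,1)
  have hint : ∀ i : Fin n, IntegrableOn
      (fun t => Set.indicator (Set.Ico (π.tau i) (π.tau i + π.s i)) (fun _ => A i / π.s i) t)
      (Set.Ico (0:ℝ) 1) volume := by
    intro i
    exact (MeasureTheory.integrableOn_const hvol.ne).indicator measurableSet_Ico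
  have hfint : IntegrableOn f (Set.Ico (0:ℝ) 1) volume := by
    apply MeasureTheory.integrable_finset_sum
    intro i _
    exact hint i
  have hsub : ∀ i : Fin n, Set.Ico (π.tau i) (π.tau i + π.s i) ⊆ Set.Ico (0:ℝ) 1 := by
    intro i x hx
    exact ⟨le_trans (π.tau_nonneg i) hx.1, lt_of_lt_of_le hx.2 (π.fits i)⟩
  have hI : ∀ i : Fin n,
      ∫ t in Set.Ico (0:ℝ) 1,
        Set.indicator (Set.Ico (π.tau i) (π.tau i + π.s i)) (fun _ => A i / π.s i) t = A i := by
    intro i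
    rw [MeasureTheory.integral_indicator measurableSet_Ico]
    rw [MeasureTheory.Measure.restrict_restrict measurableSet_Ico,
      Set.inter_eq_self_of_subset_left (hsub i)]
    rw [MeasureTheory.setIntegral_const]
    rw [Real.volume_real_Ico_of_le (by linarith [hs_pos i] : π.tau i ≤ π.tau i + π.s i), smul_eq_mul, add_sub_cancel_left]
    have hsne := (hs_pos i).ne'
    field_simp
  have hIf : ∫ t in Set.Ico (0:ℝ) 1, f t = ∑ j, A j := by
    rw [hf]
    unfold power
    rw [MeasureTheory.integral_finset_sum _ (fun i _ => hint i)]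
    exact Finset.sum_congr rfl fun i _ => hI i
  -- boundedness of the image
  have hbd : ∀ t, f t ≤ ∑ i, A i / π.s i := by
    intro t
    apply Finset.sum_le_sum
    intro i _
    by_cases h : t ∈ Set.Ico (π.tau i) (π.tau i + π.s i)
    · rw [Set.indicator_of_mem h]
    · rw [Set.indicator_of_notMem h]
      exact div_nonneg (hA i).le (hs_pos i).le
  have hbdd : BddAbove (f '' Set.Ico (0:ℝ) 1) := by
    refine ⟨∑ i, A i / π.s i, ?_⟩
    rintro x ⟨t, _, rfl⟩
    exact hbd t
  have hle : ∀ t ∈ Set.Ico (0:ℝ) 1, f t ≤ peak A π := by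
    intro t ht
    exact le_csSup hbdd ⟨t, ht, rfl⟩
  have : ∫ t in Set.Ico (0:ℝ) 1, f t ≤ ∫ _t in Set.Ico (0:ℝ) 1, peak A π := by
    apply MeasureTheory.setIntegral_mono_on hfint
      (MeasureTheory.integrableOn_const hvol.ne) measurableSet_Ico hle
  rw [hIf, MeasureTheory.setIntegral_const, Real.volume_real_Ico_of_le (by norm_num)] at this
  simpa using this

theorem ideal_case_side_by_side (l r : ℝ) (n : ℕ) (A : Fin n → ℝ)
    (hl : 0 < l) (hlr : l ≤ r) (hr : r ≤ 1) (hn : 1 ≤ n) (hA : ∀ i, 0 < A i)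
    (hfit : ∀ i, l ≤ A i / (∑ j, A j) ∧ A i / (∑ j, A j) ≤ r) :
    ∃ π : Policy l r n,
      (∀ i, π.s i = A i / (∑ j, A j) ∧
        π.tau i = ∑ j ∈ Finset.univ.filter (fun j => j < i), A j / (∑ k, A k)) ∧
      (∀ i, A i / π.s i = ∑ j, A j) ∧
      (∀ t ∈ Set.Ico (0 : ℝ) 1, power A π t = ∑ j, A j) ∧
      peak A π = ∑ j, A j ∧
      peak A π = Popt l r n A := by
  have hne : Nonempty (Fin n) := Fin.pos_iff_nonempty.mp (by omega)
  set S := ∑ j, A j with hSdef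
  have hS : 0 < S := Finset.sum_pos (fun i _ => hA i) Finset.univ_nonempty
  -- partial sums
  set T : ℕ → ℝ := fun k => ∑ j ∈ Finset.univ.filter (fun j : Fin n => (j:ℕ) < k), A j / S
    with hTdef
  have hTmono : Monotone T := by
    intro a b hab
    apply Finset.sum_le_sum_of_subset_of_nonneg
    · intro j hj
      simp only [Finset.mem_filter, Finset.mem_univ, true_and] at hj ⊢
      omega
    · intro j _ _
      exact div_nonneg (hA j).le hS.le
  have hT0 : T 0 = 0 := by simp [hTdef]
  have hTn : T n = 1 := by
    have hfil : Finset.univ.filter (fun j : Fin n => (j:ℕ) < n) = Finset.univ := by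
      apply Finset.filter_true_of_mem
      intro j _
      exact j.isLt
    rw [hTdef]
    simp only [hfil]
    rw [← Finset.sum_div, ← hSdef, div_self hS.ne']
  have hTsucc : ∀ i : Fin n, T ((i:ℕ) + 1) = T i + A i / S := by
    intro i
    have hfil : Finset.univ.filter (fun j : Fin n => (j:ℕ) < (i:ℕ) + 1)
        = insert i (Finset.univ.filter (fun j : Fin n => (j:ℕ) < (i:ℕ))) := by
      ext j
      simp only [Finset.mem_filter, Finset.mem_univ, true_and, Finset.mem_insert, Fin.ext_iff]
      omega
    rw [hTdef]
    simp only [hfil]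
    rw [Finset.sum_insert (by simp)]
    ring
  have htauT : ∀ i : Fin n,
      (∑ j ∈ Finset.univ.filter (fun j => j < i), A j / S) = T i := by
    intro i
    rw [hTdef]
    apply Finset.sum_congr _ (fun _ _ => rfl)
    apply Finset.filter_congr
    intro j _
    exact Fin.lt_def
  have htau_nonneg : ∀ i : Fin n,
      (0:ℝ) ≤ ∑ j ∈ Finset.univ.filter (fun j => j < i), A j / S := by
    intro i
    apply Finset.sum_nonneg
    intro j _
    exact div_nonneg (hA j).le hS.le
  have hfits : ∀ i : Fin n,
      (∑ j ∈ Finset.univ.filter (fun j => j < i), A j / S) + A i / S ≤ 1 := by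
    intro i
    rw [htauT i]
    calc T i + A i / S = T ((i:ℕ) + 1) := (hTsucc i).symm
      _ ≤ T n := hTmono i.isLt
      _ = 1 := hTn
  set π : Policy l r n :=
    ⟨fun i => ∑ j ∈ Finset.univ.filter (fun j => j < i), A j / S,
      fun i => A i / S, htau_nonneg, hfits, fun i => (hfit i).1, fun i => (hfit i).2⟩
    with hπdef
  have hSval : ∀ i : Fin n, A i / π.s i = S := by
    intro i
    show A i / (A i / S) = S
    rw [div_div_eq_mul_div, mul_comm, mul_div_assoc, div_self (hA i).ne', mul_one]
  have hpow : ∀ t ∈ Set.Ico (0:ℝ) 1, power A π t = S := by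
    intro t ht
    obtain ⟨ht0, ht1⟩ := ht
    have hex : ∃ k, t < T (k + 1) := ⟨n - 1, by rw [Nat.sub_add_cancel hn, hTn]; exact ht1⟩
    set k₀ := Nat.find hex with hk₀def
    have hlt : t < T (k₀ + 1) := Nat.find_spec hex
    have hk₀n : k₀ < n := by
      have := Nat.find_min' hex (by rw [Nat.sub_add_cancel hn, hTn]; exact ht1)
      omega
    have hge : T k₀ ≤ t := by
      rcases Nat.eq_zero_or_pos k₀ with h0 | hpos
      · rw [h0, hT0]; exact ht0
      · by_contra hcon
        push_neg at hcon
        have := Nat.find_min hex (show k₀ - 1 < k₀ by omega)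
        rw [Nat.sub_add_cancel hpos] at this
        exact this hcon
    set i₀ : Fin n := ⟨k₀, hk₀n⟩ with hi₀def
    have htau : ∀ j : Fin n, π.tau j = T j := fun j => htauT j
    have htaus : ∀ j : Fin n, π.tau j + π.s j = T ((j:ℕ) + 1) := by
      intro j
      rw [htau j]
      exact (hTsucc j).symm
    unfold power
    rw [Finset.sum_eq_single i₀]
    · rw [htaus i₀, htau i₀]
      rw [Set.indicator_of_mem (show t ∈ Set.Ico (T (i₀:ℕ)) (T ((i₀:ℕ)+1)) from ⟨hge, hlt⟩)]
      exact hSval i₀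
    · intro j _ hj
      rw [htaus j, htau j]
      apply Set.indicator_of_notMem
      intro hmem
      obtain ⟨hm1, hm2⟩ := hmem
      rcases lt_trichotomy (j:ℕ) k₀ with h | h | h
      · exact (Nat.find_min hex h) hm2
      · exact hj (Fin.ext h)
      · have : T (k₀ + 1) ≤ T (j:ℕ) := hTmono (by omega)
        linarith
    · intro h
      exact absurd (Finset.mem_univ i₀) h
  have hpeak : peak A π = S := by
    unfold peak
    have himg : power A π '' Set.Ico (0:ℝ) 1 = {S} := by
      apply Set.Subset.antisymm
      · rintro x ⟨t, ht, rfl⟩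
        exact hpow t ht
      · rintro x rfl
        exact ⟨0, ⟨le_refl 0, zero_lt_one⟩, hpow 0 ⟨le_refl 0, zero_lt_one⟩⟩
    rw [himg, csSup_singleton]
  refine ⟨π, fun i => ⟨rfl, rfl⟩, hSval, hpow, hpeak, ?_⟩
  rw [hpeak]
  unfold Popt
  apply le_antisymm
  · have hne' : {p : ℝ | ∃ π' : Policy l r n, p = peak A π'}.Nonempty := ⟨S, π, hpeak.symm⟩
    apply le_csInf hne'
    rintro p ⟨π', rfl⟩
    exact peak_lower_bound A hl hA π'
  · apply csInf_le
    · refine ⟨S, ?_⟩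
      rintro p ⟨π', rfl⟩
      exact peak_lower_bound A hl hA π'
    · exact ⟨π, hpeak.symm⟩
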